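/- For every t ∈ (0,1), set A(t) = (t σ(t)(β'(t)σ(t) − β(t)σ'(t)))^{−1}, α(t) = β(t)A(t)/2, and γ(t) = 1 − α(t)σ(t)². Then α(t) > 0 and |γ(t)|/α(t) = g^F(t)², where g^F(t)² = |2tσ(t)² (β'(t)/β(t) − 1/(2t) − σ'(t)/σ(t))| = |2tσ(t)(β'(t)σ(t)/β(t) − σ'(t)) − σ(t)²|. Consequently, whenever γ(t) ≠ 0, the unique minimizer over u > 0 of u ↦ u^{−1}(γ(t) + α(t)u)² is u = g^F(t)². -/

import Mathlib

open Set

noncomputable section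

/-- `A(t) = (t σ(t)(β'(t)σ(t) − β(t)σ'(t)))⁻¹`. -/
def coefA (β σ : ℝ → ℝ) (t : ℝ) : ℝ :=
  (t * σ t * (deriv β t * σ t - β t * deriv σ t))⁻¹

/-- `α(t) = β(t) A(t) / 2`. -/
def coefAlpha (β σ : ℝ → ℝ) (t : ℝ) : ℝ := β t * coefA β σ t / 2

/-- `γ(t) = 1 − α(t) σ(t)²`. -/
def coefGamma (β σ : ℝ → ℝ) (t : ℝ) : ℝ := 1 - coefAlpha β σ t * σ t ^ 2

/-- The squared Föllmer diffusion coefficient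
`g^F(t)² = |2tσ(t)²(β'(t)/β(t) − 1/(2t) − σ'(t)/σ(t))|`. -/
def gFsq (β σ : ℝ → ℝ) (t : ℝ) : ℝ :=
  |2 * t * σ t ^ 2 * (deriv β t / β t - 1 / (2 * t) - deriv σ t / σ t)|

/-- `α(t) > 0`, `|γ(t)|/α(t) = g^F(t)²` with both closed forms, and whenever
`γ(t) ≠ 0` the map `u ↦ u⁻¹(γ(t) + α(t)u)²` is uniquely minimized over `u > 0` at
`u = g^F(t)²`. -/
theorem follmer_coefficient_minimizer (β σ : ℝ → ℝ)
    (hβC : ContDiff ℝ 1 β) (hσC : ContDiff ℝ 1 σ)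
    (hβ0 : β 0 = 0) (hβ1 : β 1 = 1) (hσ0 : 0 < σ 0) (hσ1 : σ 1 = 0)
    (hβ' : ∀ t ∈ Icc (0:ℝ) 1, 0 < deriv β t)
    (hσ' : ∀ t ∈ Icc (0:ℝ) 1, deriv σ t < 0) :
    ∀ t ∈ Ioo (0:ℝ) 1,
      0 < coefAlpha β σ t ∧
      |coefGamma β σ t| / coefAlpha β σ t = gFsq β σ t ∧
      gFsq β σ t = |2 * t * σ t * (deriv β t * σ t / β t - deriv σ t) - σ t ^ 2| ∧
      (coefGamma β σ t ≠ 0 →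
        (∀ u : ℝ, 0 < u →
          (coefGamma β σ t + coefAlpha β σ t * gFsq β σ t) ^ 2 / gFsq β σ t ≤
            (coefGamma β σ t + coefAlpha β σ t * u) ^ 2 / u) ∧
        (∀ u : ℝ, 0 < u →
          (coefGamma β σ t + coefAlpha β σ t * u) ^ 2 / u =
            (coefGamma β σ t + coefAlpha β σ t * gFsq β σ t) ^ 2 / gFsq β σ t →
          u = gFsq β σ t)) := by
  
  intro t ht
  obtain ⟨ht0, ht1⟩ := ht
  have htmem : t ∈ Icc (0:ℝ) 1 := ⟨ht0.le, ht1.le⟩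
  have hβmono : StrictMonoOn β (Icc 0 1) := by
    apply strictMonoOn_of_deriv_pos (convex_Icc 0 1) hβC.continuous.continuousOn
    intro x hx
    rw [interior_Icc] at hx
    exact hβ' x ⟨hx.1.le, hx.2.le⟩
  have hσanti : StrictAntiOn σ (Icc 0 1) := by
    apply strictAntiOn_of_deriv_neg (convex_Icc 0 1) hσC.continuous.continuousOn
    intro x hx
    rw [interior_Icc] at hx
    exact hσ' x ⟨hx.1.le, hx.2.le⟩
  have hb : 0 < β t := by
    have := hβmono (by norm_num : (0:ℝ) ∈ Icc (0:ℝ) 1) htmem ht0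
    rwa [hβ0] at this
  have hs : 0 < σ t := by
    have := hσanti htmem (by norm_num : (1:ℝ) ∈ Icc (0:ℝ) 1) ht1
    rwa [hσ1] at this
  have hb' := hβ' t htmem
  have hs' := hσ' t htmem
  have hD : 0 < deriv β t * σ t - β t * deriv σ t := by nlinarith
  have hprod : 0 < t * σ t * (deriv β t * σ t - β t * deriv σ t) :=
    mul_pos (mul_pos ht0 hs) hD
  have hα : 0 < coefAlpha β σ t := by
    unfold coefAlpha coefA
    exact div_pos (mul_pos hb (inv_pos.2 hprod)) two_pos
  set E : ℝ := 2 * t * σ t * (deriv β t * σ t / β t - deriv σ t) - σ t ^ 2 with hEdef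
  have claim2 : gFsq β σ t = |E| := by
    unfold gFsq
    rw [hEdef]
    congr 1
    field_simp
    ring
  have hγE : coefGamma β σ t = coefAlpha β σ t * E := by
    unfold coefGamma coefAlpha coefA
    rw [hEdef]
    have hI : (t * σ t * (deriv β t * σ t - β t * deriv σ t))⁻¹ * (t * σ t * (deriv β t * σ t - β t * deriv σ t)) = 1 := inv_mul_cancel₀ hprod.ne'
    have hbi : β t * (deriv β t * σ t / β t) = deriv β t * σ t := mul_div_cancel₀ _ hb.ne'
    linear_combination (-1 : ℝ) * hI - ((t * σ t * (deriv β t * σ t - β t * deriv σ t))⁻¹ * t * σ t) * hbi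
  have claim1 : |coefGamma β σ t| / coefAlpha β σ t = gFsq β σ t := by
    rw [hγE, abs_mul, abs_of_pos hα, mul_div_cancel_left₀ _ hα.ne', claim2]
  refine ⟨hα, claim1, claim2, fun hγne => ?_⟩
  set γ := coefGamma β σ t
  set α := coefAlpha β σ t
  set G := gFsq β σ t
  have hapos : 0 < |γ| := abs_pos.2 hγne
  have hGval : G = |γ| / α := claim1.symm
  have hcancel : α * (|γ| / α) = |γ| := by field_simp
  have hfact : ∀ u : ℝ, (γ + α * u) ^ 2 * |γ| - (γ + |γ|) ^ 2 * α * u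
      = |γ| * (|γ| - α * u) ^ 2 := by
    intro u
    linear_combination (α * u - |γ|) * (sq_abs γ)
  constructor
  · intro u hu
    rw [hGval, hcancel, div_div_eq_mul_div, div_le_div_iff₀ hapos hu]
    have := hfact u
    nlinarith [mul_nonneg (abs_nonneg γ) (sq_nonneg (|γ| - α * u))]
  · intro u hu hEq
    rw [hGval, hcancel, div_div_eq_mul_div, div_eq_div_iff hu.ne' hapos.ne'] at hEq
    have h0 : |γ| * (|γ| - α * u) ^ 2 = 0 := by
      have := hfact u
      linarith
    have h1 : (|γ| - α * u) ^ 2 = 0 := by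
      rcases mul_eq_zero.1 h0 with h | h
      · exact absurd h hapos.ne'
      · exact h
    have h2 : |γ| = α * u := by
      have := pow_eq_zero_iff (n := 2) (by norm_num) |>.1 h1
      linarith [sub_eq_zero.1 this]
    rw [hGval, eq_div_iff hα.ne']
    linarith [h2]
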